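/- Let m ⊆ ℱ be a sub-σ-algebra. For P-almost every ω, the map ε ↦ (E_P[Y | m](ω) + ε E_P[Y s | m](ω)) / (1 + ε E_P[s | m](ω)), defined for |ε| < 1/‖s‖∞ (where the denominator is positive), is differentiable at ε = 0 with derivative equal to E_P[s (Y − E_P[Y | m]) | m](ω). (This map is, for each ε, a version of the conditional expectation of Y given m under the tilted measure P_ε.) -/

import Mathlib

open MeasureTheory

/-- Let `m ⊆ ℱ` be a sub-σ-algebra. For `P`-a.e. `ω`, the map
`ε ↦ (E_P[Y | m](ω) + ε E_P[Y s | m](ω)) / (1 + ε E_P[s | m](ω))` (which is, for each `ε`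
with `|ε| < 1/‖s‖∞`, a version of the conditional expectation of `Y` given `m` under the
tilted measure `P_ε`) is differentiable at `ε = 0` with derivative
`E_P[s (Y − E_P[Y | m]) | m](ω)`. -/
theorem stmt_1
    {Ω : Type*} [mΩ : MeasurableSpace Ω] (P : Measure Ω) [IsProbabilityMeasure P]
    (Y : Ω → ℝ) (hYm : Measurable Y) (hYb : ∃ C, ∀ ω, |Y ω| ≤ C)
    (s : Ω → ℝ) (hsm : Measurable s) (hsb : ∃ C, ∀ ω, |s ω| ≤ C)
    (hs0 : ∫ ω, s ω ∂P = 0)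
    (hsnorm : 0 < (eLpNorm s ⊤ P).toReal)
    (m : MeasurableSpace Ω) (hm : m ≤ mΩ) :
    ∀ᵐ ω ∂P,
      HasDerivAt
        (fun ε : ℝ => ((P[Y|m]) ω + ε * (P[fun ω' => Y ω' * s ω'|m]) ω) /
          (1 + ε * (P[s|m]) ω))
        ((P[fun ω' => s ω' * (Y ω' - (P[Y|m]) ω')|m]) ω) 0 := by
  obtain ⟨Cy, hCy⟩ := hYb
  obtain ⟨Cs, hCs⟩ := hsb
  have hs_int : Integrable s P :=
    (integrable_const Cs).mono' hsm.aestronglyMeasurable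
      (ae_of_all _ fun ω => by simpa using hCs ω)
  have hYs_int : Integrable (fun ω' => Y ω' * s ω') P := by
    refine (integrable_const (Cy * Cs)).mono' (hYm.mul hsm).aestronglyMeasurable
      (ae_of_all _ fun ω => ?_)
    have hCy0 : 0 ≤ Cy := le_trans (abs_nonneg _) (hCy ω)
    simp only [Real.norm_eq_abs, abs_mul]
    exact mul_le_mul (hCy ω) (hCs ω) (abs_nonneg _) hCy0
  have hg_int : Integrable (P[Y|m]) P := integrable_condExp
  have hgs_int : Integrable (fun ω' => (P[Y|m]) ω' * s ω') P :=
    (hg_int.bdd_mul hsm.aestronglyMeasurable (ae_of_all _ fun ω => by simpa using hCs ω)).congr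
      (Filter.Eventually.of_forall fun ω => mul_comm _ _)
  -- pull-out property
  have hpull : P[fun ω' => (P[Y|m]) ω' * s ω'|m] =ᵐ[P] fun ω => (P[Y|m]) ω * (P[s|m]) ω :=
    condExp_mul_of_stronglyMeasurable_left stronglyMeasurable_condExp hgs_int hs_int
  have hfun : (fun ω' => s ω' * (Y ω' - (P[Y|m]) ω')) =
      fun ω' => Y ω' * s ω' - (P[Y|m]) ω' * s ω' := by
    funext ω'; ring
  have hsub : P[fun ω' => s ω' * (Y ω' - (P[Y|m]) ω')|m] =ᵐ[P]
      fun ω => (P[fun ω' => Y ω' * s ω'|m]) ω - (P[fun ω' => (P[Y|m]) ω' * s ω'|m]) ω := by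
    rw [hfun]
    exact condExp_sub hYs_int hgs_int m
  have key : P[fun ω' => s ω' * (Y ω' - (P[Y|m]) ω')|m] =ᵐ[P]
      fun ω => (P[fun ω' => Y ω' * s ω'|m]) ω - (P[Y|m]) ω * (P[s|m]) ω := by
    filter_upwards [hsub, hpull] with ω h1 h2
    rw [h1, h2]
  filter_upwards [key] with ω hω
  rw [hω]
  set a := (P[Y|m]) ω
  set b := (P[fun ω' => Y ω' * s ω'|m]) ω
  set c := (P[s|m]) ω
  have h1 : HasDerivAt (fun ε : ℝ => a + ε * b) b 0 := by
    simpa using ((hasDerivAt_id (0:ℝ)).mul_const b).const_add a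
  have h2 : HasDerivAt (fun ε : ℝ => 1 + ε * c) c 0 := by
    simpa using ((hasDerivAt_id (0:ℝ)).mul_const c).const_add 1
  have hne : (1 : ℝ) + 0 * c ≠ 0 := by norm_num
  have := h1.div h2 hne
  simp only [zero_mul, add_zero, mul_one, one_pow, div_one] at this
  exact this
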